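/- For all integers a, b ≥ 0, the identity Σ_{c=0}^{min(a,b)} (λ; λ²)_c · [a+b choose 2c, a−c, b−c]_λ · λ^{(a−c)(b−c)} = [a+b choose a]_{λ²} holds in ℚ(λ). -/

import Mathlib

noncomputable section

/-- The field `ℚ(λ)` of rational functions. -/
abbrev K : Type := RatFunc ℚ

/-- The indeterminate `λ`. -/
def Xq : K := RatFunc.X

/-- `(n)_t = ∏_{i=1}^n (t^i − 1)`. -/
def qfact (t : K) (n : ℕ) : K := ∏ i ∈ Finset.range n, (t ^ (i + 1) - 1)

/-- `(x; y)_n = ∏_{i=1}^n (1 − x·y^{i−1})`. -/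
def qpoch (x y : K) (n : ℕ) : K := ∏ i ∈ Finset.range n, (1 - x * y ^ i)

/-- The Gaussian binomial `[n choose m]_t` (with value `0` out of range). -/
def qbinomN (t : K) (n m : ℕ) : K :=
  if m ≤ n then qfact t n / (qfact t m * qfact t (n - m)) else 0

/-- The `t`-multinomial `[m₁+m₂+m₃ choose m₁, m₂, m₃]_t`. -/
def qmul3 (t : K) (m1 m2 m3 : ℕ) : K :=
  qfact t (m1 + m2 + m3) / (qfact t m1 * qfact t m2 * qfact t m3)

/- ### Auxiliary machinery -/

lemma Xq_pow_sub_one_ne_zero {k : ℕ} (hk : k ≠ 0) : Xq ^ k - (1:K) ≠ 0 := by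
  have h0 : (Polynomial.X ^ k - Polynomial.C (1:ℚ)) ≠ 0 :=
    Polynomial.X_pow_sub_C_ne_zero (Nat.pos_of_ne_zero hk) 1
  have h : Xq ^ k - (1:K) = algebraMap (Polynomial ℚ) K (Polynomial.X ^ k - Polynomial.C 1) := by
    rw [map_sub, map_pow, RatFunc.algebraMap_X, Xq, Polynomial.C_1, map_one]
  rw [h]
  exact RatFunc.algebraMap_ne_zero h0

lemma qfact_succ (t : K) (n : ℕ) : qfact t (n + 1) = qfact t n * (t ^ (n + 1) - 1) :=
  Finset.prod_range_succ _ _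

lemma qpoch_succ (x y : K) (n : ℕ) : qpoch x y (n + 1) = qpoch x y n * (1 - x * y ^ n) :=
  Finset.prod_range_succ _ _

@[simp] lemma qfact_zero (t : K) : qfact t 0 = 1 := rfl

@[simp] lemma qpoch_zero (x y : K) : qpoch x y 0 = 1 := rfl

lemma qfact_Xq_ne_zero (n : ℕ) : qfact Xq n ≠ 0 := by
  unfold qfact
  rw [Finset.prod_ne_zero_iff]
  intro i _
  exact Xq_pow_sub_one_ne_zero (Nat.succ_ne_zero i)

lemma qfact_Xq2_ne_zero (n : ℕ) : qfact (Xq ^ 2) n ≠ 0 := by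
  unfold qfact
  rw [Finset.prod_ne_zero_iff]
  intro i _
  rw [← pow_mul]
  exact Xq_pow_sub_one_ne_zero (by omega)

/-- The summand of the left-hand side. -/
def trm (a b c : ℕ) : K :=
  qpoch Xq (Xq ^ 2) c * qmul3 Xq (2 * c) (a - c) (b - c) * Xq ^ ((a - c) * (b - c))

/-- The telescoping witness. -/
def Ufun (a b c : ℕ) : K :=
  trm a b c * Xq ^ (a - c) * (Xq ^ (2 * c) - 1) / (Xq ^ (a + b) - 1)

set_option maxHeartbeats 2000000 in
/-- Generic case of the termwise telescoping identity. -/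
lemma generic (c x y : ℕ) :
    trm (c + x + 1) (c + y + 1) c - trm (c + x) (c + y + 1) c
      - Xq ^ (2 * (c + x + 1)) * trm (c + x + 1) (c + y) c
    = Ufun (c + x + 1) (c + y + 1) c - Ufun (c + x + 1) (c + y + 1) (c + 1) := by
  have e1 : c + x + 1 - c = x + 1 := by omega
  have e2 : c + y + 1 - c = y + 1 := by omega
  have e3 : c + x - c = x := by omega
  have e4 : c + y - c = y := by omega
  have e5 : c + x + 1 - (c + 1) = x := by omega
  have e6 : c + y + 1 - (c + 1) = y := by omega
  have f1 : 2 * c + (x + 1) + (y + 1) = 2 * c + x + y + 1 + 1 := by omega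
  have f2 : 2 * c + x + (y + 1) = 2 * c + x + y + 1 := by omega
  have f3 : 2 * c + (x + 1) + y = 2 * c + x + y + 1 := by omega
  have f4 : 2 * c + 1 + 1 + x + y = 2 * c + x + y + 1 + 1 := by omega
  have f5 : 2 * (c + 1) = 2 * c + 1 + 1 := by omega
  have f7 : 2 * c + x + y + 1 = 2 * c + x + y + 1 := rfl
  have f6 : c + x + 1 + (c + y + 1) = 2 * c + x + y + 1 + 1 := by omega
  have hx2c : (Xq ^ 2 : K) ^ c = Xq ^ (2 * c) := by rw [← pow_mul]
  simp only [Ufun, trm, qmul3, e1, e2, e3, e4, e5, e6, f1, f2, f3, f4, f5, f6,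
    qfact_succ, qpoch_succ, hx2c]
  set F1 := qfact Xq (2 * c) with hF1
  set F2 := qfact Xq x with hF2
  set F3 := qfact Xq y with hF3
  set F4 := qfact Xq (2 * c + x + y) with hF4
  set u5 := Xq ^ (2 * c + x + y + 1 + 1) - (1:K) with hu5
  set u6 := Xq ^ (x + 1) - (1:K) with hu6
  set u7 := Xq ^ (y + 1) - (1:K) with hu7
  set u8 := Xq ^ (2 * c + 1) - (1:K) with hu8
  set u9 := Xq ^ (2 * c + 1 + 1) - (1:K) with hu9
  set u11 := Xq ^ (2 * c + x + y + 1) - (1:K) with hu11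
  have h1 : F1 ≠ 0 := qfact_Xq_ne_zero (2 * c)
  have h2 : F2 ≠ 0 := qfact_Xq_ne_zero x
  have h3 : F3 ≠ 0 := qfact_Xq_ne_zero y
  have h4 : F4 ≠ 0 := qfact_Xq_ne_zero (2 * c + x + y)
  have h5 : u5 ≠ 0 := Xq_pow_sub_one_ne_zero (by omega)
  have h6 : u6 ≠ 0 := Xq_pow_sub_one_ne_zero (by omega)
  have h7 : u7 ≠ 0 := Xq_pow_sub_one_ne_zero (by omega)
  have h8 : u8 ≠ 0 := Xq_pow_sub_one_ne_zero (by omega)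
  have h9 : u9 ≠ 0 := Xq_pow_sub_one_ne_zero (by omega)
  have h11 : u11 ≠ 0 := Xq_pow_sub_one_ne_zero (by omega)
  field_simp
  have hD1 : (F1 * (F2 * u6) * (F3 * u7) * (F1 * F2 * (F3 * u7))) ≠ (0:K) := by
    apply_rules [mul_ne_zero]
  have hD2 : (F1 * (F2 * u6) * (F3 * u7) * u5) ≠ (0:K) := by apply_rules [mul_ne_zero]
  have hD3 : (F1 * u8 * u9 * F2 * F3 * u5) ≠ (0:K) := by apply_rules [mul_ne_zero]
  have hD23 : (F1 * (F2 * u6) * (F3 * u7) * u5) * (F1 * u8 * u9 * F2 * F3 * u5) ≠ (0:K) :=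
    mul_ne_zero hD2 hD3
  rw [hu5, hu6, hu7, hu8]
  ring

/-- Edge case `a < b` (so `c = a + 1`). -/
lemma edge_lt (a y : ℕ) :
    trm (a + 1) (a + 1 + y + 1) (a + 1)
      - Xq ^ (2 * (a + 1)) * trm (a + 1) (a + 1 + y) (a + 1)
    = Ufun (a + 1) (a + 1 + y + 1) (a + 1) := by
  have e1 : a + 1 - (a + 1) = 0 := by omega
  have e2 : a + 1 + y + 1 - (a + 1) = y + 1 := by omega
  have e3 : a + 1 + y - (a + 1) = y := by omega
  simp only [Ufun, trm, qmul3]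
  rw [e1, e2, e3]
  have f1 : 2 * (a + 1) + 0 + (y + 1) = (2 * (a + 1) + y) + 1 := by omega
  have f2 : 2 * (a + 1) + 0 + y = 2 * (a + 1) + y := by omega
  have f6 : a + 1 + (a + 1 + y + 1) = 2 * (a + 1) + y + 1 := by omega
  rw [f1, f2, f6, qfact_succ, qfact_succ Xq y]
  have h1 := qfact_Xq_ne_zero (2 * (a + 1))
  have h3 := qfact_Xq_ne_zero y
  have h4 := qfact_Xq_ne_zero (2 * (a + 1) + y)
  have h5 : Xq ^ (2 * (a + 1) + y + 1) - (1:K) ≠ 0 := Xq_pow_sub_one_ne_zero (by omega)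
  have h7 : Xq ^ (y + 1) - (1:K) ≠ 0 := Xq_pow_sub_one_ne_zero (by omega)
  field_simp
  ring

/-- Edge case `b < a` (so `c = b + 1`). -/
lemma edge_gt (b x : ℕ) :
    trm (b + 1 + x + 1) (b + 1) (b + 1) - trm (b + 1 + x) (b + 1) (b + 1)
    = Ufun (b + 1 + x + 1) (b + 1) (b + 1) := by
  have e1 : b + 1 - (b + 1) = 0 := by omega
  have e2 : b + 1 + x + 1 - (b + 1) = x + 1 := by omega
  have e3 : b + 1 + x - (b + 1) = x := by omega
  simp only [Ufun, trm, qmul3]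
  rw [e1, e2, e3]
  have f1 : 2 * (b + 1) + (x + 1) + 0 = (2 * (b + 1) + x) + 1 := by omega
  have f2 : 2 * (b + 1) + x + 0 = 2 * (b + 1) + x := by omega
  have f6 : b + 1 + x + 1 + (b + 1) = 2 * (b + 1) + x + 1 := by omega
  rw [f1, f2, f6, qfact_succ, qfact_succ Xq x]
  have h1 := qfact_Xq_ne_zero (2 * (b + 1))
  have h3 := qfact_Xq_ne_zero x
  have h4 := qfact_Xq_ne_zero (2 * (b + 1) + x)
  have h5 : Xq ^ (2 * (b + 1) + x + 1) - (1:K) ≠ 0 := Xq_pow_sub_one_ne_zero (by omega)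
  have h7 : Xq ^ (x + 1) - (1:K) ≠ 0 := Xq_pow_sub_one_ne_zero (by omega)
  field_simp
  ring

/-- Edge case `a = b` (so `c = a + 1`). -/
lemma edge_eq (a : ℕ) :
    trm (a + 1) (a + 1) (a + 1) = Ufun (a + 1) (a + 1) (a + 1) := by
  have e1 : a + 1 - (a + 1) = 0 := by omega
  simp only [Ufun, trm, qmul3]
  rw [e1]
  have f1 : 2 * (a + 1) + 0 + 0 = 2 * (a + 1) := by omega
  have f6 : a + 1 + (a + 1) = 2 * (a + 1) := by omega
  rw [f1, f6]
  have h1 := qfact_Xq_ne_zero (2 * (a + 1))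
  have h5 : Xq ^ (2 * (a + 1)) - (1:K) ≠ 0 := Xq_pow_sub_one_ne_zero (by omega)
  field_simp

lemma Ufun_zero (a b : ℕ) : Ufun a b 0 = 0 := by
  unfold Ufun
  simp

/-- Padding a sum with an `if` guard. -/
lemma sum_pad (f : ℕ → K) {N M : ℕ} (h : N ≤ M) :
    ∑ c ∈ Finset.range N, f c = ∑ c ∈ Finset.range M, (if c < N then f c else 0) := by
  have h1 : ∑ c ∈ Finset.range N, f c = ∑ c ∈ Finset.range N, (if c < N then f c else 0) :=
    Finset.sum_congr rfl (fun c hc => by simp [Finset.mem_range.mp hc])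
  rw [h1]
  exact Finset.sum_subset (Finset.range_subset_range.mpr h) (fun c _ hc => by
    simp only [Finset.mem_range] at hc
    simp [hc])

/-- The termwise telescoping identity. -/
lemma key (a b c : ℕ) (hc : c ≤ min a b + 1) :
    trm (a+1) (b+1) c
      - ((if c < min a (b+1) + 1 then trm a (b+1) c else 0)
         + Xq ^ (2*(a+1)) * (if c < min (a+1) b + 1 then trm (a+1) b c else 0))
    = (if c ≤ min a b + 1 then Ufun (a+1) (b+1) c else 0)
      - (if c + 1 ≤ min a b + 1 then Ufun (a+1) (b+1) (c+1) else 0) := by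
  rcases le_or_gt c (min a b) with h | h
  · obtain ⟨x, hx⟩ := Nat.exists_eq_add_of_le (show c ≤ a by omega)
    obtain ⟨y, hy⟩ := Nat.exists_eq_add_of_le (show c ≤ b by omega)
    subst hx; subst hy
    rw [if_pos (by omega), if_pos (by omega), if_pos (by omega), if_pos (by omega)]
    linear_combination generic c x y
  · rcases lt_trichotomy a b with hab | hab | hab
    · obtain ⟨y, hy⟩ : ∃ y, b = a + 1 + y := ⟨b - (a+1), by omega⟩
      subst hy
      have hc2 : c = a + 1 := by omega
      subst hc2
      rw [if_neg (by omega), if_pos (by omega), if_pos (by omega), if_neg (by omega)]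
      linear_combination edge_lt a y
    · subst hab
      have hc2 : c = a + 1 := by omega
      subst hc2
      rw [if_neg (by omega), if_neg (by omega), if_pos (by omega), if_neg (by omega)]
      linear_combination edge_eq a
    · obtain ⟨x, hx⟩ : ∃ x, a = b + 1 + x := ⟨a - (b+1), by omega⟩
      subst hx
      have hc2 : c = b + 1 := by omega
      subst hc2
      rw [if_pos (by omega), if_neg (by omega), if_pos (by omega), if_neg (by omega)]
      linear_combination edge_gt b x

/-- The recurrence for the left-hand side. -/
lemma sumrec (a b : ℕ) :
    (∑ c ∈ Finset.range (min (a+1) (b+1) + 1), trm (a+1) (b+1) c)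
    = (∑ c ∈ Finset.range (min a (b+1) + 1), trm a (b+1) c)
      + Xq ^ (2 * (a+1)) * ∑ c ∈ Finset.range (min (a+1) b + 1), trm (a+1) b c := by
  have hmab : min (a+1) (b+1) + 1 = min a b + 1 + 1 := by omega
  have h1 : min a (b+1) + 1 ≤ min a b + 1 + 1 := by omega
  have h2 : min (a+1) b + 1 ≤ min a b + 1 + 1 := by omega
  rw [hmab, sum_pad _ h1, sum_pad _ h2, Finset.mul_sum, ← Finset.sum_add_distrib,
    ← sub_eq_zero, ← Finset.sum_sub_distrib]
  rw [Finset.sum_congr rfl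
    (fun c hc => key a b c (by have := Finset.mem_range.mp hc; omega))]
  rw [Finset.sum_range_sub' (fun c => if c ≤ min a b + 1 then Ufun (a+1) (b+1) c else 0)]
  simp [Ufun_zero]

lemma base_left (b : ℕ) :
    (∑ c ∈ Finset.range (min 0 b + 1), trm 0 b c) = qbinomN (Xq ^ 2) (0 + b) 0 := by
  simp [trm, qmul3, qbinomN, qfact_Xq_ne_zero, qfact_Xq2_ne_zero]

lemma base_right (a : ℕ) :
    (∑ c ∈ Finset.range (min a 0 + 1), trm a 0 c) = qbinomN (Xq ^ 2) (a + 0) a := by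
  simp [trm, qmul3, qbinomN, qfact_Xq_ne_zero, qfact_Xq2_ne_zero]

lemma pascal (a b : ℕ) :
    qbinomN (Xq ^ 2) (a + (b+1)) a + Xq ^ (2 * (a+1)) * qbinomN (Xq ^ 2) ((a+1) + b) (a+1)
    = qbinomN (Xq ^ 2) ((a+1) + (b+1)) (a+1) := by
  have g1 : a + (b+1) = a + b + 1 := by omega
  have g2 : (a+1) + b = a + b + 1 := by omega
  have g3 : (a+1) + (b+1) = a + b + 1 + 1 := by omega
  have e1 : a + b + 1 - a = b + 1 := by omega
  have e2 : a + b + 1 - (a + 1) = b := by omega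
  have e3 : a + b + 1 + 1 - (a + 1) = b + 1 := by omega
  rw [g1, g2, g3]
  unfold qbinomN
  rw [if_pos (by omega), if_pos (by omega), if_pos (by omega), e1, e2, e3,
    qfact_succ (Xq ^ 2) (a + b + 1), qfact_succ (Xq ^ 2) a, qfact_succ (Xq ^ 2) b]
  have hpm : ∀ k : ℕ, ((Xq ^ 2) ^ k : K) = Xq ^ (2 * k) := fun k => by rw [← pow_mul]
  have h1 := qfact_Xq2_ne_zero a
  have h2 := qfact_Xq2_ne_zero b
  have h3 := qfact_Xq2_ne_zero (a + b + 1)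
  have h4 : ((Xq ^ 2) ^ (a + 1) : K) - 1 ≠ 0 := by
    rw [hpm]; exact Xq_pow_sub_one_ne_zero (by omega)
  have h5 : ((Xq ^ 2) ^ (b + 1) : K) - 1 ≠ 0 := by
    rw [hpm]; exact Xq_pow_sub_one_ne_zero (by omega)
  have h6 : ((Xq ^ 2) ^ (a + b + 1 + 1) : K) - 1 ≠ 0 := by
    rw [hpm]; exact Xq_pow_sub_one_ne_zero (by omega)
  field_simp
  ring

lemma main : ∀ n a b : ℕ, a + b = n →
    (∑ c ∈ Finset.range (min a b + 1), trm a b c) = qbinomN (Xq ^ 2) (a + b) a := by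
  intro n
  induction n with
  | zero =>
    intro a b hab
    obtain ⟨rfl, rfl⟩ : a = 0 ∧ b = 0 := by omega
    exact base_left 0
  | succ n ih =>
    intro a b hab
    match a, b with
    | 0, b => exact base_left b
    | a + 1, 0 => exact base_right (a + 1)
    | a + 1, b + 1 =>
      rw [sumrec a b, ih a (b+1) (by omega), ih (a+1) b (by omega)]
      exact pascal a b

theorem stmt2 (a b : ℕ) :
    ∑ c ∈ Finset.range (min a b + 1),
      qpoch Xq (Xq ^ 2) c * qmul3 Xq (2 * c) (a - c) (b - c) * Xq ^ ((a - c) * (b - c))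
    = qbinomN (Xq ^ 2) (a + b) a := by
  have := main (a + b) a b rfl
  simpa [trm] using this
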